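/- Let φ ∈ ℝ. Then there exists a constant c(φ) > 0 such that for all p ∈ (0, ∞), the intermediate energy satisfies I_p(E_φ) ≤ c(φ)^p · I_p(E_{π/2}). -/

import Mathlib

open MeasureTheory Real
open scoped ENNReal NNReal Classical

/-- The Menger curvature of three points in `ℝⁿ`: the reciprocal of the circumradius,
`κ(x,y,z) = 2 dist(z, L_{x,y}) / (|x-z| |y-z|)` for pairwise distinct non-collinear points,
and `0` otherwise. -/
noncomputable def menger {n : ℕ} (x y z : EuclideanSpace ℝ (Fin n)) : ℝ :=
  if x ≠ y ∧ y ≠ z ∧ x ≠ z ∧ ¬ Collinear ℝ ({x, y, z} : Set (EuclideanSpace ℝ (Fin n)))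
  then 2 * Metric.infDist z (affineSpan ℝ ({x, y} : Set (EuclideanSpace ℝ (Fin n))) :
      Set (EuclideanSpace ℝ (Fin n))) / (dist x z * dist y z)
  else 0

/-- The point `(a, b) ∈ ℝ²` (with the Euclidean metric). -/
noncomputable def pt (a b : ℝ) : EuclideanSpace ℝ (Fin 2) :=
  (WithLp.equiv 2 (Fin 2 → ℝ)).symm ![a, b]

/-- The one-corner set `E_φ = ([0,1) × {0}) ∪ [0,1)·(cos φ, sin φ)`. -/
noncomputable def Eset (φ : ℝ) : Set (EuclideanSpace ℝ (Fin 2)) :=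
  {x | ∃ t ∈ Set.Ico (0:ℝ) 1, x = pt t 0} ∪
    {x | ∃ t ∈ Set.Ico (0:ℝ) 1, x = t • pt (Real.cos φ) (Real.sin φ)}

/-- Integral Menger curvature `M_p(X)` (innermost integration in `x`). -/
noncomputable def Mp (p : ℝ) (X : Set (EuclideanSpace ℝ (Fin 2))) : ℝ≥0∞ :=
  ∫⁻ z in X, ∫⁻ y in X, ∫⁻ x in X,
    (ENNReal.ofReal (menger x y z)) ^ p ∂μH[1] ∂μH[1] ∂μH[1]

/-- Intermediate energy `I_p(X)`. -/
noncomputable def Ip (p : ℝ) (X : Set (EuclideanSpace ℝ (Fin 2))) : ℝ≥0∞ :=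
  ∫⁻ y in X, ∫⁻ x in X,
    (⨆ z ∈ X, ENNReal.ofReal (menger x y z)) ^ p ∂μH[1] ∂μH[1]

/-- Global curvature energy `U_p(X)`. -/
noncomputable def Up (p : ℝ) (X : Set (EuclideanSpace ℝ (Fin 2))) : ℝ≥0∞ :=
  ∫⁻ x in X, (⨆ y ∈ X, ⨆ z ∈ X, ENNReal.ofReal (menger x y z)) ^ p ∂μH[1]

/-! ### Auxiliary lemmas -/

@[simp] lemma pt_apply_zero (a b : ℝ) : pt a b 0 = a := rfl
@[simp] lemma pt_apply_one (a b : ℝ) : pt a b 1 = b := rfl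

lemma smul_pt (t a b : ℝ) : t • pt a b = pt (t * a) (t * b) := by
  ext i; fin_cases i <;> simp [pt]

lemma norm_pt (a b : ℝ) : ‖pt a b‖ = Real.sqrt (a ^ 2 + b ^ 2) := by
  rw [EuclideanSpace.norm_eq]
  simp [Fin.sum_univ_two, sq_abs]

/-- The linear shear sending `E_{π/2}` onto `E_φ`. -/
noncomputable def Fmap (φ : ℝ) (v : EuclideanSpace ℝ (Fin 2)) : EuclideanSpace ℝ (Fin 2) :=
  pt (v 0 + v 1 * Real.cos φ) (v 1 * Real.sin φ)

lemma Fmap_sub (φ : ℝ) (u v : EuclideanSpace ℝ (Fin 2)) :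
    Fmap φ u - Fmap φ v = Fmap φ (u - v) := by
  ext i; fin_cases i <;> simp [Fmap] <;> ring

lemma Fmap_smul_add (φ : ℝ) (r : ℝ) (v p : EuclideanSpace ℝ (Fin 2)) :
    Fmap φ (r • v + p) = r • Fmap φ v + Fmap φ p := by
  ext i; fin_cases i <;> simp [Fmap] <;> ring

lemma norm_Fmap_le (φ : ℝ) (w : EuclideanSpace ℝ (Fin 2)) : ‖Fmap φ w‖ ≤ 2 * ‖w‖ := by
  have h2 : (0:ℝ) ≤ 2 * ‖w‖ := by positivity
  rw [show (2:ℝ) * ‖w‖ = Real.sqrt ((2 * ‖w‖) ^ 2) from (Real.sqrt_sq h2).symm]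
  rw [Fmap, norm_pt]
  apply Real.sqrt_le_sqrt
  have hw : ‖w‖ ^ 2 = w 0 ^ 2 + w 1 ^ 2 := by
    rw [EuclideanSpace.norm_eq]
    rw [Real.sq_sqrt (by positivity)]
    simp [Fin.sum_univ_two, sq_abs]
  have hcs := Real.sin_sq_add_cos_sq φ
  nlinarith [sq_nonneg (w 0 - w 1 * Real.cos φ), sq_nonneg (Real.sin φ), sq_nonneg (w 1),
    sq_nonneg (w 0), sq_nonneg (w 1 * Real.sin φ)]

lemma norm_le_norm_Fmap (φ : ℝ) (w : EuclideanSpace ℝ (Fin 2)) :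
    |Real.sin φ| * ‖w‖ ≤ 3 * ‖Fmap φ w‖ := by
  have h1 : (0:ℝ) ≤ |Real.sin φ| * ‖w‖ := by positivity
  have h3 : (0:ℝ) ≤ 3 * ‖Fmap φ w‖ := by positivity
  rw [show |Real.sin φ| * ‖w‖ = Real.sqrt ((|Real.sin φ| * ‖w‖) ^ 2) from (Real.sqrt_sq h1).symm,
    show (3:ℝ) * ‖Fmap φ w‖ = Real.sqrt ((3 * ‖Fmap φ w‖) ^ 2) from (Real.sqrt_sq h3).symm]
  apply Real.sqrt_le_sqrt
  have hw : ‖w‖ ^ 2 = w 0 ^ 2 + w 1 ^ 2 := by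
    rw [EuclideanSpace.norm_eq]; rw [Real.sq_sqrt (by positivity)]
    simp [Fin.sum_univ_two, sq_abs]
  have hF : ‖Fmap φ w‖ ^ 2 = (w 0 + w 1 * Real.cos φ) ^ 2 + (w 1 * Real.sin φ) ^ 2 := by
    rw [Fmap, norm_pt, Real.sq_sqrt (by positivity)]
  have hcs := Real.sin_sq_add_cos_sq φ
  have habs : |Real.sin φ| ^ 2 = Real.sin φ ^ 2 := sq_abs _
  set a := w 0; set b := w 1; set c := Real.cos φ; set s := Real.sin φ
  rw [mul_pow, mul_pow, habs, hw, hF]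
  nlinarith [sq_nonneg (s * (a + b * c) + s * b * c), sq_nonneg (s * (a + b * c) - s * b * c),
    sq_nonneg (c * (a + b * c)), sq_nonneg (s * b), sq_nonneg (s * a), sq_nonneg (b * s * c),
    sq_nonneg s, sq_nonneg c]

lemma dist_Fmap_le (φ : ℝ) (u v : EuclideanSpace ℝ (Fin 2)) :
    dist (Fmap φ u) (Fmap φ v) ≤ 2 * dist u v := by
  rw [dist_eq_norm, dist_eq_norm, Fmap_sub]
  exact norm_Fmap_le φ (u - v)

lemma dist_le_dist_Fmap (φ : ℝ) (u v : EuclideanSpace ℝ (Fin 2)) :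
    |Real.sin φ| * dist u v ≤ 3 * dist (Fmap φ u) (Fmap φ v) := by
  rw [dist_eq_norm, dist_eq_norm, Fmap_sub]
  exact norm_le_norm_Fmap φ (u - v)

lemma collinear_Fmap (φ : ℝ) {x y z : EuclideanSpace ℝ (Fin 2)}
    (h : Collinear ℝ ({x, y, z} : Set (EuclideanSpace ℝ (Fin 2)))) :
    Collinear ℝ ({Fmap φ x, Fmap φ y, Fmap φ z} : Set (EuclideanSpace ℝ (Fin 2))) := by
  rw [collinear_iff_exists_forall_eq_smul_vadd] at h ⊢
  obtain ⟨p, v, h⟩ := h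
  refine ⟨Fmap φ p, Fmap φ v, ?_⟩
  intro q hq
  have key : ∀ u ∈ ({x, y, z} : Set (EuclideanSpace ℝ (Fin 2))),
      ∃ r : ℝ, Fmap φ u = r • Fmap φ v +ᵥ Fmap φ p := by
    intro u hu
    obtain ⟨r, hr⟩ := h u hu
    exact ⟨r, by rw [hr]; simpa [vadd_eq_add] using Fmap_smul_add φ r v p⟩
  rcases hq with rfl | rfl | rfl
  · obtain ⟨r, hr⟩ := key x (by simp); exact ⟨r, hr⟩
  · obtain ⟨r, hr⟩ := key y (by simp); exact ⟨r, hr⟩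
  · obtain ⟨r, hr⟩ := key z (by simp); exact ⟨r, hr⟩

lemma menger_nonneg {n : ℕ} (x y z : EuclideanSpace ℝ (Fin n)) : 0 ≤ menger x y z := by
  unfold menger
  split
  · apply div_nonneg
    · have := Metric.infDist_nonneg (x := z)
        (s := (affineSpan ℝ ({x, y} : Set (EuclideanSpace ℝ (Fin n))) :
          Set (EuclideanSpace ℝ (Fin n))))
      linarith
    · positivity
  · exact le_refl 0

lemma Fmap_mem_span {φ : ℝ} {x y w : EuclideanSpace ℝ (Fin 2)}
    (hw : w ∈ (affineSpan ℝ ({x, y} : Set (EuclideanSpace ℝ (Fin 2))) :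
      Set (EuclideanSpace ℝ (Fin 2)))) :
    Fmap φ w ∈ (affineSpan ℝ ({Fmap φ x, Fmap φ y} : Set (EuclideanSpace ℝ (Fin 2))) :
      Set (EuclideanSpace ℝ (Fin 2))) := by
  have hw' : (w - x) +ᵥ x ∈ line[ℝ, x, y] := by
    simpa [vadd_eq_add, sub_add_cancel] using hw
  rw [vadd_left_mem_affineSpan_pair] at hw'
  obtain ⟨r, hr⟩ := hw'
  have hwx : w = r • (y - x) + x := by
    have hr' : r • (y - x) = w - x := hr
    rw [hr']; abel
  have : Fmap φ w = r • (Fmap φ y -ᵥ Fmap φ x) +ᵥ Fmap φ x := by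
    rw [hwx]
    rw [Fmap_smul_add φ r (y - x) x, ← Fmap_sub]
    simp [vadd_eq_add, vsub_eq_sub]
  rw [this]
  exact smul_vsub_vadd_mem_affineSpan_pair r _ _

/-- Key comparison: `Fmap φ` increases the Menger curvature by at most `18 / sin² φ`. -/
lemma menger_Fmap_le {φ : ℝ} (hs : Real.sin φ ≠ 0) (x y z : EuclideanSpace ℝ (Fin 2)) :
    menger (Fmap φ x) (Fmap φ y) (Fmap φ z) ≤ (18 / Real.sin φ ^ 2) * menger x y z := by
  have hspos : 0 < |Real.sin φ| := abs_pos.mpr hs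
  have hc18 : (0:ℝ) < 18 / Real.sin φ ^ 2 := by positivity
  unfold menger
  by_cases h' : Fmap φ x ≠ Fmap φ y ∧ Fmap φ y ≠ Fmap φ z ∧ Fmap φ x ≠ Fmap φ z ∧
      ¬ Collinear ℝ ({Fmap φ x, Fmap φ y, Fmap φ z} : Set (EuclideanSpace ℝ (Fin 2)))
  · obtain ⟨h1, h2, h3, h4⟩ := h'
    have hxy : x ≠ y := fun h => h1 (by rw [h])
    have hyz : y ≠ z := fun h => h2 (by rw [h])
    have hxz : x ≠ z := fun h => h3 (by rw [h])
    have hcol : ¬ Collinear ℝ ({x, y, z} : Set (EuclideanSpace ℝ (Fin 2))) :=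
      fun h => h4 (collinear_Fmap φ h)
    rw [if_pos ⟨h1, h2, h3, h4⟩, if_pos ⟨hxy, hyz, hxz, hcol⟩]
    set S : Set (EuclideanSpace ℝ (Fin 2)) :=
      (affineSpan ℝ ({x, y} : Set (EuclideanSpace ℝ (Fin 2))) : Set (EuclideanSpace ℝ (Fin 2)))
    set S' : Set (EuclideanSpace ℝ (Fin 2)) :=
      (affineSpan ℝ ({Fmap φ x, Fmap φ y} : Set (EuclideanSpace ℝ (Fin 2))) :
        Set (EuclideanSpace ℝ (Fin 2)))
    set d := Metric.infDist z S
    set d' := Metric.infDist (Fmap φ z) S'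
    have hSne : S.Nonempty := ⟨x, subset_affineSpan ℝ _ (by simp)⟩
    have hd0 : 0 ≤ d := Metric.infDist_nonneg
    have hd'0 : 0 ≤ d' := Metric.infDist_nonneg
    have hdd : d' ≤ 2 * d := by
      by_contra hlt
      push_neg at hlt
      have : d < d' / 2 := by linarith
      obtain ⟨w, hwS, hw⟩ := (Metric.infDist_lt_iff hSne).mp this
      have hFw : Fmap φ w ∈ S' := Fmap_mem_span hwS
      have : d' ≤ dist (Fmap φ z) (Fmap φ w) := Metric.infDist_le_dist_of_mem hFw
      have h2d : dist (Fmap φ z) (Fmap φ w) ≤ 2 * dist z w := dist_Fmap_le φ z w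
      linarith
    have hD1 : 0 < dist x z := dist_pos.mpr hxz
    have hD2 : 0 < dist y z := dist_pos.mpr hyz
    have hB1 : |Real.sin φ| / 3 * dist x z ≤ dist (Fmap φ x) (Fmap φ z) := by
      have := dist_le_dist_Fmap φ x z; linarith
    have hB2 : |Real.sin φ| / 3 * dist y z ≤ dist (Fmap φ y) (Fmap φ z) := by
      have := dist_le_dist_Fmap φ y z; linarith
    have hq1 : 0 < |Real.sin φ| / 3 * dist x z := by positivity
    have hq2 : 0 < |Real.sin φ| / 3 * dist y z := by positivity
    calc 2 * d' / (dist (Fmap φ x) (Fmap φ z) * dist (Fmap φ y) (Fmap φ z))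
        ≤ (4 * d) / ((|Real.sin φ| / 3 * dist x z) * (|Real.sin φ| / 3 * dist y z)) := by
          apply div_le_div₀ (by linarith) (by linarith) (by positivity)
          exact mul_le_mul hB1 hB2 hq2.le (by positivity)
      _ = (18 / Real.sin φ ^ 2) * (2 * d / (dist x z * dist y z)) := by
          rw [show (|Real.sin φ| / 3 * dist x z) * (|Real.sin φ| / 3 * dist y z)
              = Real.sin φ ^ 2 / 9 * (dist x z * dist y z) by rw [← sq_abs]; ring]
          field_simp
          ring
  · rw [if_neg h']
    exact mul_nonneg hc18.le (menger_nonneg x y z)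

/-! ### Measure-theoretic transfer -/

lemma isometry_smul_unit {v : EuclideanSpace ℝ (Fin 2)} (hv : ‖v‖ = 1) :
    Isometry (fun t : ℝ => t • v) := by
  apply Isometry.of_dist_eq
  intro a b
  rw [dist_eq_norm, dist_eq_norm, ← sub_smul, norm_smul, hv, mul_one, Real.norm_eq_abs]

lemma measurableEmbedding_smul_unit {v : EuclideanSpace ℝ (Fin 2)} (hv : ‖v‖ = 1) :
    MeasurableEmbedding (fun t : ℝ => t • v) :=
  ((isometry_smul_unit hv).isClosedEmbedding).measurableEmbedding

lemma lint_seg {v : EuclideanSpace ℝ (Fin 2)} (hv : ‖v‖ = 1) {s : Set ℝ} (hs : MeasurableSet s)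
    (g : EuclideanSpace ℝ (Fin 2) → ℝ≥0∞) :
    ∫⁻ x in (fun t : ℝ => t • v) '' s, g x ∂μH[1] = ∫⁻ t in s, g (t • v) ∂(μH[1] : Measure ℝ) := by
  have hiso := isometry_smul_unit hv
  have hemb := measurableEmbedding_smul_unit hv
  have him : MeasurableSet ((fun t : ℝ => t • v) '' s) := hemb.measurableSet_image.mpr hs
  have hmap : Measure.map (fun t : ℝ => t • v) (μH[1] : Measure ℝ) =
      μH[1].restrict (Set.range (fun t : ℝ => t • v)) :=
    hiso.map_hausdorffMeasure (Or.inl zero_le_one)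
  have hsub : (fun t : ℝ => t • v) '' s ⊆ Set.range (fun t : ℝ => t • v) :=
    Set.image_subset_range _ _
  have hres : (μH[1] : Measure (EuclideanSpace ℝ (Fin 2))).restrict ((fun t : ℝ => t • v) '' s)
      = (Measure.map (fun t : ℝ => t • v) (μH[1] : Measure ℝ)).restrict
        ((fun t : ℝ => t • v) '' s) := by
    rw [hmap, Measure.restrict_restrict him, Set.inter_eq_left.mpr hsub]
  calc ∫⁻ x in (fun t : ℝ => t • v) '' s, g x ∂μH[1]
      = ∫⁻ x, g x ∂((Measure.map (fun t : ℝ => t • v) (μH[1] : Measure ℝ)).restrict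
          ((fun t : ℝ => t • v) '' s)) := by rw [← hres]
    _ = ∫⁻ x, g x ∂(Measure.map (fun t : ℝ => t • v)
          ((μH[1] : Measure ℝ).restrict ((fun t : ℝ => t • v) ⁻¹' ((fun t : ℝ => t • v) '' s)))) := by
        rw [Measure.restrict_map hemb.measurable him]
    _ = ∫⁻ x, g x ∂(Measure.map (fun t : ℝ => t • v) ((μH[1] : Measure ℝ).restrict s)) := by
        rw [Set.preimage_image_eq s hemb.injective]
    _ = ∫⁻ t in s, g (t • v) ∂(μH[1] : Measure ℝ) := hemb.lintegral_map g

lemma Eset_eq (φ : ℝ) : Eset φ =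
    (fun t : ℝ => t • pt 1 0) '' Set.Ico 0 1 ∪
      (fun t : ℝ => t • pt (Real.cos φ) (Real.sin φ)) '' Set.Ico 0 1 := by
  unfold Eset
  congr 1
  · ext x
    constructor
    · rintro ⟨t, ht, rfl⟩
      exact ⟨t, ht, by simp [smul_pt]⟩
    · rintro ⟨t, ht, rfl⟩
      exact ⟨t, ht, by simp [smul_pt]⟩
  · ext x
    constructor
    · rintro ⟨t, ht, rfl⟩; exact ⟨t, ht, rfl⟩
    · rintro ⟨t, ht, rfl⟩; exact ⟨t, ht, rfl⟩

lemma pt_pi_div_two : pt (Real.cos (π/2)) (Real.sin (π/2)) = pt 0 1 := by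
  rw [Real.cos_pi_div_two, Real.sin_pi_div_two]

lemma norm_pt_cos_sin (φ : ℝ) : ‖pt (Real.cos φ) (Real.sin φ)‖ = 1 := by
  rw [norm_pt, Real.cos_sq_add_sin_sq φ, Real.sqrt_one]

lemma hausdorff_singleton_zero :
    (μH[1] : Measure (EuclideanSpace ℝ (Fin 2))) {(0 : EuclideanSpace ℝ (Fin 2))} = 0 := by
  have hv : ‖pt 1 0‖ = 1 := by rw [norm_pt]; norm_num
  have him : ({(0 : EuclideanSpace ℝ (Fin 2))} : Set (EuclideanSpace ℝ (Fin 2)))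
      = (fun t : ℝ => t • pt 1 0) '' {0} := by
    simp
  rw [him, (isometry_smul_unit hv).hausdorffMeasure_image (Or.inl zero_le_one),
    MeasureTheory.hausdorffMeasure_real]
  simp

/-- Pushing an integral over `E_φ` back to `E_{π/2}` via `Fmap φ`. -/
lemma transfer {φ : ℝ} (g : EuclideanSpace ℝ (Fin 2) → ℝ≥0∞) :
    ∫⁻ x in Eset φ, g x ∂μH[1] ≤ ∫⁻ x in Eset (π/2), g (Fmap φ x) ∂μH[1] := by
  have hv1 : ‖pt 1 0‖ = 1 := by rw [norm_pt]; norm_num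
  have hv2 : ‖pt 0 1‖ = 1 := by rw [norm_pt]; norm_num
  have hvφ : ‖pt (Real.cos φ) (Real.sin φ)‖ = 1 := norm_pt_cos_sin φ
  set A : Set (EuclideanSpace ℝ (Fin 2)) := (fun t : ℝ => t • pt 1 0) '' Set.Ico 0 1 with hAdef
  set B : Set (EuclideanSpace ℝ (Fin 2)) := (fun t : ℝ => t • pt 0 1) '' Set.Ico 0 1 with hBdef
  set Bφ : Set (EuclideanSpace ℝ (Fin 2)) :=
    (fun t : ℝ => t • pt (Real.cos φ) (Real.sin φ)) '' Set.Ico 0 1 with hBφdef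
  have hEφ : Eset φ = A ∪ Bφ := Eset_eq φ
  have hEπ : Eset (π/2) = A ∪ B := by rw [Eset_eq (π/2), pt_pi_div_two]
  have hAm : MeasurableSet A := (measurableEmbedding_smul_unit hv1).measurableSet_image.mpr
    measurableSet_Ico
  have hBm : MeasurableSet B := (measurableEmbedding_smul_unit hv2).measurableSet_image.mpr
    measurableSet_Ico
  have hFA : ∀ t : ℝ, Fmap φ (t • pt 1 0) = t • pt 1 0 := by
    intro t; rw [smul_pt]; unfold Fmap; simp [smul_pt]
  have hFB : ∀ t : ℝ, Fmap φ (t • pt 0 1) = t • pt (Real.cos φ) (Real.sin φ) := by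
    intro t; rw [smul_pt]; unfold Fmap; simp [smul_pt, mul_comm]
  have hABnull : (μH[1] : Measure (EuclideanSpace ℝ (Fin 2))) (A ∩ B) = 0 := by
    apply measure_mono_null ?_ hausdorff_singleton_zero
    rintro x ⟨⟨t, _, rfl⟩, ⟨t', _, ht'⟩⟩
    have h0 : t' • pt 0 1 = t • pt 1 0 := ht'
    have h1 : (t' • pt 0 1) 0 = (t • pt 1 0) 0 := by rw [h0]
    rw [smul_pt, smul_pt] at h1
    simp only [pt_apply_zero] at h1
    have ht0 : t = 0 := by linarith
    show t • pt 1 0 ∈ ({(0 : EuclideanSpace ℝ (Fin 2))} : Set (EuclideanSpace ℝ (Fin 2)))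
    rw [Set.mem_singleton_iff, ht0, zero_smul]
  calc ∫⁻ x in Eset φ, g x ∂μH[1]
      ≤ ∫⁻ x in A, g x ∂μH[1] + ∫⁻ x in Bφ, g x ∂μH[1] := by
        rw [hEφ]
        refine le_trans (lintegral_mono' (Measure.restrict_union_le _ _) le_rfl) ?_
        rw [lintegral_add_measure]
    _ = ∫⁻ t in Set.Ico (0:ℝ) 1, g (t • pt 1 0) ∂(μH[1] : Measure ℝ)
          + ∫⁻ t in Set.Ico (0:ℝ) 1, g (t • pt (Real.cos φ) (Real.sin φ)) ∂(μH[1] : Measure ℝ) := by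
        rw [lint_seg hv1 measurableSet_Ico, lint_seg hvφ measurableSet_Ico]
    _ = ∫⁻ t in Set.Ico (0:ℝ) 1, g (Fmap φ (t • pt 1 0)) ∂(μH[1] : Measure ℝ)
          + ∫⁻ t in Set.Ico (0:ℝ) 1, g (Fmap φ (t • pt 0 1)) ∂(μH[1] : Measure ℝ) := by
        congr 1
        · exact lintegral_congr fun t => by rw [hFA t]
        · exact lintegral_congr fun t => by rw [hFB t]
    _ = ∫⁻ x in A, g (Fmap φ x) ∂μH[1] + ∫⁻ x in B, g (Fmap φ x) ∂μH[1] := by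
        rw [lint_seg hv1 measurableSet_Ico, lint_seg hv2 measurableSet_Ico]
    _ = ∫⁻ x in A ∪ B, g (Fmap φ x) ∂μH[1] + ∫⁻ x in A ∩ B, g (Fmap φ x) ∂μH[1] := by
        rw [← lintegral_add_measure, ← lintegral_add_measure,
          Measure.restrict_union_add_inter A hBm]
    _ = ∫⁻ x in Eset (π/2), g (Fmap φ x) ∂μH[1] := by
        rw [Measure.restrict_eq_zero.mpr hABnull, lintegral_zero_measure, add_zero, hEπ]

/-! ### Degenerate case -/

lemma menger_eq_zero_of_sin_eq_zero {φ : ℝ} (hs : Real.sin φ = 0)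
    {x y z : EuclideanSpace ℝ (Fin 2)} (hx : x ∈ Eset φ) (hy : y ∈ Eset φ) (hz : z ∈ Eset φ) :
    menger x y z = 0 := by
  have hcoord : ∀ u ∈ Eset φ, u 1 = 0 := by
    rintro u (⟨t, _, rfl⟩ | ⟨t, _, rfl⟩)
    · simp
    · rw [smul_pt]; simp [hs]
  have hcol : Collinear ℝ ({x, y, z} : Set (EuclideanSpace ℝ (Fin 2))) := by
    rw [collinear_iff_exists_forall_eq_smul_vadd]
    refine ⟨0, pt 1 0, ?_⟩
    intro u hu
    have hu1 : u 1 = 0 := by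
      rcases hu with rfl | rfl | rfl
      · exact hcoord _ hx
      · exact hcoord _ hy
      · exact hcoord _ hz
    refine ⟨u 0, ?_⟩
    ext i; fin_cases i <;> simp [smul_pt, hu1]
  unfold menger
  rw [if_neg]
  rintro ⟨-, -, -, h4⟩
  exact h4 hcol

lemma MeasurableSet_Eset (φ : ℝ) : MeasurableSet (Eset φ) := by
  rw [Eset_eq φ]
  have hv1 : ‖pt 1 0‖ = 1 := by rw [norm_pt]; norm_num
  exact ((measurableEmbedding_smul_unit hv1).measurableSet_image.mpr measurableSet_Ico).union
    (((measurableEmbedding_smul_unit (norm_pt_cos_sin φ)).measurableSet_image).mpr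
      measurableSet_Ico)

/-! ### Main theorem -/

/-- `I_p(E_φ) ≤ c(φ)^p · I_p(E_{π/2})`. -/
theorem Ip_Eset_le (φ : ℝ) :
    ∃ c : ℝ, 0 < c ∧ ∀ p : ℝ, 0 < p →
      Ip p (Eset φ) ≤ ENNReal.ofReal (c ^ p) * Ip p (Eset (π / 2)) := by
  by_cases hs : Real.sin φ = 0
  · refine ⟨1, one_pos, fun p hp => ?_⟩
    have hin : ∀ y ∈ Eset φ,
        (∫⁻ x in Eset φ, (⨆ z ∈ Eset φ, ENNReal.ofReal (menger x y z)) ^ p ∂μH[1]) = 0 := by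
      intro y hy
      have hix : ∀ x ∈ Eset φ,
          (⨆ z ∈ Eset φ, ENNReal.ofReal (menger x y z)) ^ p = (fun _ => (0:ℝ≥0∞)) x := by
        intro x hx
        have hsup : (⨆ z ∈ Eset φ, ENNReal.ofReal (menger x y z)) = 0 := by
          refine le_antisymm (iSup₂_le fun z hz => ?_) zero_le
          rw [menger_eq_zero_of_sin_eq_zero hs hx hy hz]
          simp
        show (⨆ z ∈ Eset φ, ENNReal.ofReal (menger x y z)) ^ p = (0:ℝ≥0∞)
        rw [hsup, ENNReal.zero_rpow_of_pos hp]
      rw [setLIntegral_congr_fun (MeasurableSet_Eset φ) hix,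
        lintegral_zero]
    have hzero : Ip p (Eset φ) = 0 := by
      unfold Ip
      have hiy : ∀ y ∈ Eset φ,
          (∫⁻ x in Eset φ, (⨆ z ∈ Eset φ, ENNReal.ofReal (menger x y z)) ^ p ∂μH[1])
            = (fun _ => (0:ℝ≥0∞)) y := fun y hy => hin y hy
      rw [setLIntegral_congr_fun (MeasurableSet_Eset φ) hiy,
        lintegral_zero]
    rw [hzero]
    exact zero_le
  · set c : ℝ := 18 / Real.sin φ ^ 2 with hcdef
    have hcpos : 0 < c := by positivity
    refine ⟨c, hcpos, fun p hp => ?_⟩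
    have hsurj : ∀ z' ∈ Eset φ, ∃ z ∈ Eset (π/2), Fmap φ z = z' := by
      rintro z' (⟨t, ht, rfl⟩ | ⟨t, ht, rfl⟩)
      · exact ⟨pt t 0, Or.inl ⟨t, ht, rfl⟩, by unfold Fmap; simp⟩
      · refine ⟨pt 0 t, Or.inr ⟨t, ht, ?_⟩, ?_⟩
        · rw [pt_pi_div_two, smul_pt]; simp
        · unfold Fmap; rw [smul_pt]; simp [mul_comm]
    have hsup : ∀ x y : EuclideanSpace ℝ (Fin 2),
        (⨆ z ∈ Eset φ, ENNReal.ofReal (menger (Fmap φ x) (Fmap φ y) z))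
          ≤ ENNReal.ofReal c * ⨆ z ∈ Eset (π/2), ENNReal.ofReal (menger x y z) := by
      intro x y
      refine iSup₂_le fun z' hz' => ?_
      obtain ⟨z, hz, rfl⟩ := hsurj z' hz'
      calc ENNReal.ofReal (menger (Fmap φ x) (Fmap φ y) (Fmap φ z))
          ≤ ENNReal.ofReal (c * menger x y z) :=
            ENNReal.ofReal_le_ofReal (menger_Fmap_le hs x y z)
        _ = ENNReal.ofReal c * ENNReal.ofReal (menger x y z) :=
            ENNReal.ofReal_mul hcpos.le
        _ ≤ ENNReal.ofReal c * ⨆ z ∈ Eset (π/2), ENNReal.ofReal (menger x y z) :=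
            mul_le_mul_right
              (le_biSup (fun z => ENNReal.ofReal (menger x y z)) hz) _
    have hptw : ∀ x y : EuclideanSpace ℝ (Fin 2),
        (⨆ z ∈ Eset φ, ENNReal.ofReal (menger (Fmap φ x) (Fmap φ y) z)) ^ p
          ≤ ENNReal.ofReal (c ^ p)
            * (⨆ z ∈ Eset (π/2), ENNReal.ofReal (menger x y z)) ^ p := by
      intro x y
      calc (⨆ z ∈ Eset φ, ENNReal.ofReal (menger (Fmap φ x) (Fmap φ y) z)) ^ p
          ≤ (ENNReal.ofReal c * ⨆ z ∈ Eset (π/2), ENNReal.ofReal (menger x y z)) ^ p :=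
            ENNReal.rpow_le_rpow (hsup x y) hp.le
        _ = ENNReal.ofReal c ^ p * (⨆ z ∈ Eset (π/2), ENNReal.ofReal (menger x y z)) ^ p :=
            ENNReal.mul_rpow_of_nonneg _ _ hp.le
        _ = ENNReal.ofReal (c ^ p) * (⨆ z ∈ Eset (π/2), ENNReal.ofReal (menger x y z)) ^ p := by
            rw [← ENNReal.ofReal_rpow_of_pos hcpos]
    have hinner : ∀ y : EuclideanSpace ℝ (Fin 2),
        (∫⁻ x in Eset φ, (⨆ z ∈ Eset φ, ENNReal.ofReal (menger x (Fmap φ y) z)) ^ p ∂μH[1])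
          ≤ ENNReal.ofReal (c ^ p)
            * ∫⁻ x in Eset (π/2), (⨆ z ∈ Eset (π/2), ENNReal.ofReal (menger x y z)) ^ p ∂μH[1] := by
      intro y
      calc (∫⁻ x in Eset φ, (⨆ z ∈ Eset φ, ENNReal.ofReal (menger x (Fmap φ y) z)) ^ p ∂μH[1])
          ≤ ∫⁻ x in Eset (π/2),
              (⨆ z ∈ Eset φ, ENNReal.ofReal (menger (Fmap φ x) (Fmap φ y) z)) ^ p ∂μH[1] :=
            transfer (fun x => (⨆ z ∈ Eset φ, ENNReal.ofReal (menger x (Fmap φ y) z)) ^ p)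
        _ ≤ ∫⁻ x in Eset (π/2), ENNReal.ofReal (c ^ p)
              * (⨆ z ∈ Eset (π/2), ENNReal.ofReal (menger x y z)) ^ p ∂μH[1] :=
            lintegral_mono fun x => hptw x y
        _ = ENNReal.ofReal (c ^ p)
              * ∫⁻ x in Eset (π/2), (⨆ z ∈ Eset (π/2), ENNReal.ofReal (menger x y z)) ^ p ∂μH[1] :=
            lintegral_const_mul' _ _ ENNReal.ofReal_ne_top
    calc Ip p (Eset φ)
        = ∫⁻ y in Eset φ,
            (fun y' => ∫⁻ x in Eset φ,
              (⨆ z ∈ Eset φ, ENNReal.ofReal (menger x y' z)) ^ p ∂μH[1]) y ∂μH[1] := rfl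
      _ ≤ ∫⁻ y in Eset (π/2),
            (∫⁻ x in Eset φ,
              (⨆ z ∈ Eset φ, ENNReal.ofReal (menger x (Fmap φ y) z)) ^ p ∂μH[1]) ∂μH[1] :=
          transfer _
      _ ≤ ∫⁻ y in Eset (π/2), ENNReal.ofReal (c ^ p)
            * ∫⁻ x in Eset (π/2),
                (⨆ z ∈ Eset (π/2), ENNReal.ofReal (menger x y z)) ^ p ∂μH[1] ∂μH[1] :=
          lintegral_mono fun y => hinner y
      _ = ENNReal.ofReal (c ^ p) * Ip p (Eset (π / 2)) := by
          rw [lintegral_const_mul' _ _ ENNReal.ofReal_ne_top]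
          rfl
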